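/- Let X₁, …, X_n be points in ℝ^d (n ≥ 1), let h : (0,∞) → [0,∞) be nonincreasing, let H ≥ 0, and let ε > 0. Then for every x ∈ ℝ^d there exists an index j ∈ {1,…,n} such that Σ_{i=1}^n 1_{|x - X_i| ≤ ε} · min(h(|x - X_i|), H) ≤ H + Σ_{i ≠ j} 1_{|X_i - X_j| ≤ 2ε} · min(h(|X_i - X_j|/2), H), where in the sums h(0) is interpreted as +∞ (so min(h(0),H) = H). -/

import Mathlib

theorem stmt14 (d n : ℕ) (hn : 1 ≤ n) (X : Fin n → EuclideanSpace ℝ (Fin d))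
    (h : ℝ → ℝ) (hmono : AntitoneOn h (Set.Ioi 0)) (hpos : ∀ r : ℝ, 0 < r → 0 ≤ h r)
    (H : ℝ) (hH : 0 ≤ H) (ε : ℝ) (hε : 0 < ε) (x : EuclideanSpace ℝ (Fin d)) :
    ∃ j : Fin n,
      (∑ i : Fin n, if ‖x - X i‖ ≤ ε then
          (if ‖x - X i‖ = 0 then H else min (h ‖x - X i‖) H) else 0)
        ≤ H + ∑ i ∈ Finset.univ.erase j,
            (if ‖X i - X j‖ ≤ 2 * ε then
              (if ‖X i - X j‖ = 0 then H else min (h (‖X i - X j‖ / 2)) H) else 0) := by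
  haveI : NeZero n := ⟨Nat.one_le_iff_ne_zero.mp hn⟩
  obtain ⟨j, -, hj⟩ := Finset.exists_min_image (Finset.univ : Finset (Fin n))
    (fun i => ‖x - X i‖) ⟨⟨0, hn⟩, Finset.mem_univ _⟩
  refine ⟨j, ?_⟩
  rw [← Finset.sum_erase_add _ _ (Finset.mem_univ j), add_comm]
  have hterm : (if ‖x - X j‖ ≤ ε then
      (if ‖x - X j‖ = 0 then H else min (h ‖x - X j‖) H) else 0) ≤ H := by
    split_ifs with h1 h2
    · exact le_refl H
    · exact min_le_right _ _
    · exact hH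
  refine add_le_add hterm (Finset.sum_le_sum fun i hi => ?_)
  have hij : ‖X i - X j‖ ≤ 2 * ‖x - X i‖ := by
    have h1 : ‖X i - X j‖ ≤ ‖X i - x‖ + ‖x - X j‖ := norm_sub_le_norm_sub_add_norm_sub _ _ _
    have h2 : ‖x - X j‖ ≤ ‖x - X i‖ := hj i (Finset.mem_univ i)
    rw [norm_sub_rev (X i) x] at h1
    linarith
  by_cases hc : ‖x - X i‖ ≤ ε
  · have hc2 : ‖X i - X j‖ ≤ 2 * ε := by linarith
    rw [if_pos hc, if_pos hc2]
    by_cases hz : ‖X i - X j‖ = 0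
    · rw [if_pos hz]
      split_ifs with h1
      · exact le_refl H
      · exact min_le_right _ _
    · rw [if_neg hz]
      have hzpos : 0 < ‖X i - X j‖ := (norm_nonneg _).lt_of_ne' hz
      have hxi : 0 < ‖x - X i‖ := by nlinarith
      rw [if_neg hxi.ne']
      exact min_le_min (hmono (Set.mem_Ioi.mpr (by linarith))
        (Set.mem_Ioi.mpr hxi) (by linarith)) le_rfl
  · rw [if_neg hc]
    split_ifs with h1 h2
    · exact hH
    · exact le_min (hpos _ (by positivity)) hH
    · exact le_refl 0
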